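/- Let 0 ≤ α < mn, 1 < p₁,…,p_m < ∞ with 1/p = Σ 1/p_i, and 0 < p ≤ q < ∞ with 1/q = 1/p − α/n. If the multilinear fractional strong maximal operator 𝓜_{𝓡,α} is bounded from L^{p₁}(w₁^{p₁}) × ⋯ × L^{p_m}(w_m^{p_m}) to L^q(ν_𝐰^q), where ν_𝐰 = ∏ w_i, then the weight vector 𝐰 = (w₁,…,w_m) satisfies the A_{(𝐩,q),𝓡} condition: sup_R (|R|^{−1}∫_R ν_𝐰^q)^{1/q} ∏_{i=1}^m (|R|^{−1}∫_R w_i^{−p_i'})^{1/p_i'} < ∞. -/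

import Mathlib

open MeasureTheory Set Filter Topology
open scoped ENNReal

noncomputable section

/-- An axis-parallel rectangle in `ℝⁿ`. -/
def IsRect {n : ℕ} (R : Set (Fin n → ℝ)) : Prop :=
  ∃ a b : Fin n → ℝ, (∀ i, a i < b i) ∧
    R = Set.univ.pi fun i => Set.Ioo (a i) (b i)

/-- The multilinear fractional strong maximal operator
`𝓜_{𝓡,α}(f)(x) = sup_{R∋x} ∏ᵢ |R|^{α/(mn)-1} ∫_R fᵢ`. -/
def MRalpha {n m : ℕ} (α : ℝ) (f : Fin m → (Fin n → ℝ) → ℝ≥0∞)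
    (x : Fin n → ℝ) : ℝ≥0∞ :=
  ⨆ (R : Set (Fin n → ℝ)) (_ : IsRect R ∧ x ∈ R),
    ∏ i, (volume R) ^ (α / (m * n) - 1) * ∫⁻ y in R, f i y

/-- Auxiliary: rpow with nonpositive exponent is antitone on `ℝ≥0∞`. -/
lemma aux_rpow_anti {x y : ℝ≥0∞} (h : x ≤ y) {z : ℝ} (hz : z ≤ 0) : y ^ z ≤ x ^ z := by
  rw [← neg_neg z, ENNReal.rpow_neg x, ENNReal.rpow_neg y]
  exact ENNReal.inv_le_inv' (ENNReal.rpow_le_rpow h (by linarith))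

/-- Auxiliary: rpow with nonnegative exponent commutes with monotone suprema. -/
lemma aux_rpow_iSup {g : ℕ → ℝ≥0∞} (hg : Monotone g) {e : ℝ} (he : 0 ≤ e) :
    (⨆ k, g k) ^ e = ⨆ k, g k ^ e :=
  (iSup_eq_of_tendsto (fun _ _ hab => ENNReal.rpow_le_rpow (hg hab) he)
    ((tendsto_atTop_iSup hg).ennrpow_const e)).symm

/-- Auxiliary: a product of monotone suprema is at most the supremum of products. -/
lemma aux_prod_iSup {ι : Type*} (s : Finset ι) (f : ι → ℕ → ℝ≥0∞)
    (hf : ∀ i, Monotone (f i)) :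
    ∏ i ∈ s, (⨆ k, f i k) ≤ ⨆ k, ∏ i ∈ s, f i k := by
  classical
  induction s using Finset.induction_on with
  | empty => simp
  | @insert c s ha ih =>
    rw [Finset.prod_insert ha]
    calc (⨆ k, f c k) * ∏ i ∈ s, (⨆ k, f i k)
        ≤ (⨆ k, f c k) * ⨆ k, ∏ i ∈ s, f i k := mul_le_mul_right ih _
      _ = ⨆ j, ⨆ k, f c j * ∏ i ∈ s, f i k := by
          rw [ENNReal.iSup_mul]; exact iSup_congr fun j => ENNReal.mul_iSup _ _
      _ ≤ ⨆ k, f c k * ∏ i ∈ s, f i k := by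
          refine iSup_le fun j => iSup_le fun k => ?_
          refine le_trans ?_ (le_iSup (fun k => f c k * ∏ i ∈ s, f i k) (max j k))
          exact mul_le_mul' (hf c (le_max_left j k))
            (Finset.prod_le_prod' fun i _ => hf i (le_max_right j k))
      _ = ⨆ k, ∏ i ∈ insert c s, f i k := by
          refine iSup_congr fun k => ?_
          rw [Finset.prod_insert ha]

/-- Auxiliary: product of powers of a fixed finite positive base. -/
lemma aux_prod_rpow {ι : Type*} (s : Finset ι) {x : ℝ≥0∞} (hx : x ≠ 0) (hx' : x ≠ ⊤)
    (f : ι → ℝ) : ∏ i ∈ s, x ^ f i = x ^ (∑ i ∈ s, f i) := by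
  classical
  induction s using Finset.induction_on with
  | empty => simp
  | @insert c s ha ih =>
    rw [Finset.prod_insert ha, Finset.sum_insert ha, ih, ENNReal.rpow_add _ _ hx hx']

/-- Necessity of the `A_{(𝐩,q),𝓡}` condition for the boundedness of `𝓜_{𝓡,α}`. -/
theorem stmt14 (n m : ℕ) (hn : 1 ≤ n) (hm : 1 ≤ m)
    (α : ℝ) (hα0 : 0 ≤ α) (hα1 : α < m * n)
    (pv : Fin m → ℝ) (hpv : ∀ i, 1 < pv i)
    (p q : ℝ) (hp : 1 / p = ∑ i, 1 / pv i) (hq : 1 / q = 1 / p - α / n)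
    (hp0 : 0 < p) (hpq : p ≤ q)
    (w : Fin m → (Fin n → ℝ) → ℝ≥0∞) (hw : ∀ i, Measurable (w i))
    -- boundedness of 𝓜_{𝓡,α} from ∏ L^{p_i}(w_i^{p_i}) to L^q(ν_𝐰^q)
    (hbdd : ∃ C : ℝ≥0∞, C ≠ ⊤ ∧ ∀ f : Fin m → (Fin n → ℝ) → ℝ≥0∞,
      (∀ i, Measurable (f i)) →
      (∫⁻ x, (MRalpha α f x * ∏ i, w i x) ^ q) ^ (1 / q) ≤
        C * ∏ i, (∫⁻ x, (f i x * w i x) ^ (pv i)) ^ (1 / pv i)) :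
    -- the A_{(𝐩,q),𝓡} condition; here -p_i' = -p_i/(p_i-1) and 1/p_i' = 1 - 1/p_i
    ∃ C' : ℝ≥0∞, C' ≠ ⊤ ∧ ∀ R : Set (Fin n → ℝ), IsRect R →
      ((volume R)⁻¹ * ∫⁻ x in R, (∏ i, w i x) ^ q) ^ (1 / q) *
        ∏ i, ((volume R)⁻¹ *
          ∫⁻ x in R, w i x ^ (-(pv i / (pv i - 1)))) ^ (1 - 1 / pv i) ≤ C' := by
  classical
  obtain ⟨C, hCt, hB⟩ := hbdd
  refine ⟨C, hCt, ?_⟩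
  rintro R ⟨a, b, hab, rfl⟩
  set R : Set (Fin n → ℝ) := univ.pi fun i => Ioo (a i) (b i) with hRdef
  -- basic numeric facts
  have hn0 : (n : ℝ) ≠ 0 := by positivity
  have hm0 : (m : ℝ) ≠ 0 := by positivity
  have hq0 : 0 < q := lt_of_lt_of_le hp0 hpq
  have h1q : (0:ℝ) ≤ 1 / q := by positivity
  have hpv0 : ∀ i, 0 < pv i := fun i => lt_trans one_pos (hpv i)
  have hpvm : ∀ i, 0 < pv i - 1 := fun i => sub_pos.mpr (hpv i)
  have hpc : ∀ i, -(pv i / (pv i - 1)) < 0 := fun i =>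
    neg_neg_iff_pos.mpr (div_pos (hpv0 i) (hpvm i))
  have hei : ∀ i, 0 < 1 - 1 / pv i := fun i => by
    rw [sub_pos, div_lt_one (hpv0 i)]; exact hpv i
  -- the rectangle
  have hRm : MeasurableSet R := by
    rw [hRdef]; exact MeasurableSet.univ_pi fun i => measurableSet_Ioo
  have hVeq : volume R = ∏ i, ENNReal.ofReal (b i - a i) := by
    rw [hRdef, volume_pi_pi]
    exact Finset.prod_congr rfl fun i _ => Real.volume_Ioo
  have hV0 : volume R ≠ 0 := by
    rw [hVeq]
    exact Finset.prod_ne_zero_iff.mpr fun i _ =>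
      (ENNReal.ofReal_pos.mpr (sub_pos.mpr (hab i))).ne'
  have hVt : volume R ≠ ⊤ := by
    rw [hVeq]; exact ENNReal.prod_ne_top fun i _ => ENNReal.ofReal_ne_top
  have hVi0 : (volume R)⁻¹ ≠ 0 := ENNReal.inv_ne_zero.mpr hVt
  have hVit : (volume R)⁻¹ ≠ ⊤ := ENNReal.inv_ne_top.mpr hV0
  -- the approximating weights
  set ε : ℕ → ℝ≥0∞ := fun k => (k : ℝ≥0∞)⁻¹ with hε
  have hε0 : ∀ k, ε k ≠ 0 := fun k => ENNReal.inv_ne_zero.mpr (ENNReal.natCast_ne_top k)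
  set g : Fin m → ℕ → (Fin n → ℝ) → ℝ≥0∞ :=
    fun i k x => (w i x + ε k) ^ (-(pv i / (pv i - 1))) with hgdef
  have hgm : ∀ i k, Measurable (g i k) := fun i k =>
    ((hw i).add measurable_const).pow_const _
  have hgmono : ∀ i x, Monotone fun k => g i k x := by
    intro i x k l hkl
    exact aux_rpow_anti
      (add_le_add_right (ENNReal.inv_le_inv' (Nat.cast_le.mpr hkl)) _) (hpc i).le
  set A : Fin m → ℕ → ℝ≥0∞ := fun i k => ∫⁻ x in R, g i k x with hAdef
  have hAmono : ∀ i, Monotone (A i) := fun i k l hkl =>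
    lintegral_mono fun x => hgmono i x hkl
  have hAsup : ∀ i, (∫⁻ x in R, w i x ^ (-(pv i / (pv i - 1)))) = ⨆ k, A i k := by
    intro i
    rw [hAdef, ← lintegral_iSup (fun k => hgm i k) (fun k l hkl x => hgmono i x hkl)]
    refine lintegral_congr fun x => ?_
    refine (iSup_eq_of_tendsto (hgmono i x) ?_).symm
    have h1 : Tendsto (fun k : ℕ => w i x + ε k) atTop (𝓝 (w i x)) := by
      simpa using ENNReal.tendsto_inv_nat_nhds_zero.const_add (w i x)
    exact h1.ennrpow_const _
  have hAfin : ∀ i k, A i k ≠ ⊤ := by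
    intro i k
    have hb : ∀ x ∈ R, g i k x ≤ ε k ^ (-(pv i / (pv i - 1))) := fun x _ =>
      aux_rpow_anti le_add_self (hpc i).le
    have h1 : A i k ≤ ε k ^ (-(pv i / (pv i - 1))) * volume R :=
      le_trans (setLIntegral_mono' hRm hb) (le_of_eq (setLIntegral_const _ _))
    have h2 : ε k ^ (-(pv i / (pv i - 1))) ≠ ⊤ := by
      rw [hε, ENNReal.inv_rpow, ← ENNReal.rpow_neg, neg_neg]
      exact ENNReal.rpow_ne_top_of_nonneg (div_pos (hpv0 i) (hpvm i)).le
        (ENNReal.natCast_ne_top k)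
    exact fun h => (ENNReal.mul_ne_top h2 hVt) (top_le_iff.mp (h ▸ h1))
  -- test functions
  have hFint : ∀ i k, ∫⁻ y in R, R.indicator (g i k) y = A i k := fun i k =>
    setLIntegral_congr_fun hRm (fun x hx => indicator_of_mem hx _)
  have hKle : ∀ k x, x ∈ R →
      (∏ i, volume R ^ (α / (m * n) - 1) * A i k) ≤
        MRalpha α (fun i => R.indicator (g i k)) x := by
    intro k x hx
    refine le_iSup_of_le R (le_iSup_of_le ⟨⟨a, b, hab, hRdef⟩, hx⟩ (le_of_eq ?_))
    exact Finset.prod_congr rfl fun i _ => by rw [hFint i k]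
  have hRHS : ∀ k i, (∫⁻ x, (R.indicator (g i k) x * w i x) ^ pv i) ≤ A i k := by
    intro k i
    have hpt : ∀ x, (R.indicator (g i k) x * w i x) ^ pv i ≤ R.indicator (g i k) x := by
      intro x
      by_cases hx : x ∈ R
      · rw [indicator_of_mem hx]
        by_cases htop : w i x + ε k = ⊤
        · rw [hgdef]
          simp only [htop, ENNReal.top_rpow_of_neg (hpc i)]
          simp [ENNReal.zero_rpow_of_pos (hpv0 i)]
        · have h0 : w i x + ε k ≠ 0 := by
            intro h
            rw [add_eq_zero] at h
            exact hε0 k h.2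
          calc (g i k x * w i x) ^ pv i
              ≤ (g i k x * (w i x + ε k)) ^ pv i :=
                ENNReal.rpow_le_rpow (mul_le_mul_right le_self_add _) (hpv0 i).le
            _ = g i k x := by
                rw [hgdef]
                have hmul : (w i x + ε k) ^ (-(pv i / (pv i - 1))) * (w i x + ε k) =
                    (w i x + ε k) ^ (-(pv i / (pv i - 1)) + 1) := by
                  rw [ENNReal.rpow_add _ _ h0 htop, ENNReal.rpow_one]
                rw [hmul, ← ENNReal.rpow_mul]
                congr 1
                have := (hpvm i).ne'
                field_simp
                ring
      · rw [indicator_of_notMem hx]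
        simp [ENNReal.zero_rpow_of_pos (hpv0 i)]
    calc (∫⁻ x, (R.indicator (g i k) x * w i x) ^ pv i)
        ≤ ∫⁻ x, R.indicator (g i k) x := lintegral_mono hpt
      _ = A i k := by rw [lintegral_indicator hRm]
  -- measurability of the weight product
  have hν : Measurable fun x => (∏ i, w i x) ^ q :=
    (Finset.measurable_prod _ fun i _ => hw i).pow_const q
  set I : ℝ≥0∞ := ∫⁻ x in R, (∏ i, w i x) ^ q with hIdef
  -- the key uniform estimate
  have hstep : ∀ k,
      ((volume R)⁻¹ * I) ^ (1 / q) *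
        ∏ i, ((volume R)⁻¹ * A i k) ^ (1 - 1 / pv i) ≤ C := by
    intro k
    by_cases hzero : ∃ i, A i k = 0
    · obtain ⟨i, hi⟩ := hzero
      have hz : ((volume R)⁻¹ * A i k) ^ (1 - 1 / pv i) = 0 := by
        rw [hi, mul_zero, ENNReal.zero_rpow_of_pos (hei i)]
      rw [Finset.prod_eq_zero (Finset.mem_univ i) hz, mul_zero]
      exact zero_le
    push_neg at hzero
    have hbound := hB (fun i => R.indicator (g i k)) (fun i => (hgm i k).indicator hRm)
    set K : ℝ≥0∞ := ∏ i, volume R ^ (α / (m * n) - 1) * A i k with hKdef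
    have hL1 : K * I ^ (1 / q) ≤
        (∫⁻ x, (MRalpha α (fun i => R.indicator (g i k)) x * ∏ i, w i x) ^ q) ^ (1 / q) := by
      have h1 : K ^ q * I = ∫⁻ x in R, (K * ∏ i, w i x) ^ q := by
        rw [← lintegral_const_mul _ hν]
        exact lintegral_congr fun x => (ENNReal.mul_rpow_of_nonneg _ _ hq0.le).symm
      have h2 : (∫⁻ x in R, (K * ∏ i, w i x) ^ q) ≤
          ∫⁻ x, (MRalpha α (fun i => R.indicator (g i k)) x * ∏ i, w i x) ^ q :=
        le_trans
          (setLIntegral_mono' hRm fun x hx =>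
            ENNReal.rpow_le_rpow (mul_le_mul_left (hKle k x hx) _) hq0.le)
          (setLIntegral_le_lintegral _ _)
      calc K * I ^ (1 / q) = (K ^ q * I) ^ (1 / q) := by
            rw [ENNReal.mul_rpow_of_nonneg _ _ h1q, ← ENNReal.rpow_mul,
              mul_one_div_cancel hq0.ne', ENNReal.rpow_one]
        _ ≤ _ := by rw [h1]; exact ENNReal.rpow_le_rpow h2 h1q
    have hmain : K * I ^ (1 / q) ≤ C * ∏ i, (A i k) ^ (1 / pv i) := by
      refine hL1.trans (hbound.trans (mul_le_mul_right (Finset.prod_le_prod' ?_) C))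
      exact fun i _ => ENNReal.rpow_le_rpow (hRHS k i) (one_div_nonneg.mpr (hpv0 i).le)
    set P : ℝ≥0∞ := ∏ i, (A i k) ^ (1 / pv i) with hPdef
    have hP0 : P ≠ 0 := by
      refine Finset.prod_ne_zero_iff.mpr fun i _ => ?_
      intro h
      rcases ENNReal.rpow_eq_zero_iff.mp h with ⟨h1, _⟩ | ⟨h1, h2⟩
      · exact hzero i h1
      · exact hAfin i k h1
    have hPt : P ≠ ⊤ := ENNReal.prod_ne_top fun i _ =>
      ENNReal.rpow_ne_top_of_nonneg (one_div_nonneg.mpr (hpv0 i).le) (hAfin i k)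
    rw [← ENNReal.mul_le_mul_iff_left hP0 hPt]
    have h3 : ∏ i, ((volume R)⁻¹ * A i k) ^ (1 - 1 / pv i) =
        (volume R)⁻¹ ^ (∑ i, (1 - 1 / pv i)) * ∏ i, (A i k) ^ (1 - 1 / pv i) := by
      rw [← aux_prod_rpow _ hVi0 hVit, ← Finset.prod_mul_distrib]
      exact Finset.prod_congr rfl fun i _ => ENNReal.mul_rpow_of_nonneg _ _ (hei i).le
    have h4 : (∏ i, (A i k) ^ (1 - 1 / pv i)) * P = ∏ i, A i k := by
      rw [hPdef, ← Finset.prod_mul_distrib]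
      refine Finset.prod_congr rfl fun i _ => ?_
      rw [← ENNReal.rpow_add _ _ (hzero i) (hAfin i k),
        show (1 - 1 / pv i) + 1 / pv i = 1 by ring, ENNReal.rpow_one]
    have h5 : K = volume R ^ ((α / (m * n) - 1) * m) * ∏ i, A i k := by
      rw [hKdef, Finset.prod_mul_distrib, aux_prod_rpow _ hV0 hVt]
      congr 2
      rw [Finset.sum_const, Finset.card_univ, Fintype.card_fin, nsmul_eq_mul, mul_comm]
    have h6 : (volume R)⁻¹ ^ (1 / q) * (volume R)⁻¹ ^ (∑ i, (1 - 1 / pv i)) =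
        volume R ^ ((α / (m * n) - 1) * m) := by
      rw [← ENNReal.rpow_add _ _ hVi0 hVit, ENNReal.inv_rpow, ← ENNReal.rpow_neg]
      congr 1
      have hsum : ∑ i, (1 - 1 / pv i) = (m : ℝ) - 1 / p := by
        rw [Finset.sum_sub_distrib, Finset.sum_const, Finset.card_univ, Fintype.card_fin,
          nsmul_eq_mul, mul_one, hp]
      rw [hsum, hq]
      field_simp
      ring
    calc ((volume R)⁻¹ * I) ^ (1 / q) *
          (∏ i, ((volume R)⁻¹ * A i k) ^ (1 - 1 / pv i)) * P
        = K * I ^ (1 / q) := by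
          rw [ENNReal.mul_rpow_of_nonneg _ _ h1q, h3, h5, ← h4, ← h6]
          ring
      _ ≤ C * P := hmain
  -- pass to the supremum
  have hgoal_eq : ∀ i, ((volume R)⁻¹ * ∫⁻ x in R, w i x ^ (-(pv i / (pv i - 1)))) ^
      (1 - 1 / pv i) = ⨆ k, ((volume R)⁻¹ * A i k) ^ (1 - 1 / pv i) := by
    intro i
    rw [hAsup i, ENNReal.mul_iSup]
    exact aux_rpow_iSup (fun k l hkl => mul_le_mul_right (hAmono i hkl) _) (hei i).le
  calc ((volume R)⁻¹ * I) ^ (1 / q) *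
        ∏ i, ((volume R)⁻¹ * ∫⁻ x in R, w i x ^ (-(pv i / (pv i - 1)))) ^ (1 - 1 / pv i)
      = ((volume R)⁻¹ * I) ^ (1 / q) *
          ∏ i, ⨆ k, ((volume R)⁻¹ * A i k) ^ (1 - 1 / pv i) := by
        rw [Finset.prod_congr rfl fun i _ => hgoal_eq i]
    _ ≤ ((volume R)⁻¹ * I) ^ (1 / q) *
          ⨆ k, ∏ i, ((volume R)⁻¹ * A i k) ^ (1 - 1 / pv i) := by
        refine mul_le_mul_right (aux_prod_iSup _ _ fun i k l hkl => ?_) _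
        exact ENNReal.rpow_le_rpow (mul_le_mul_right (hAmono i hkl) _) (hei i).le
    _ = ⨆ k, ((volume R)⁻¹ * I) ^ (1 / q) *
          ∏ i, ((volume R)⁻¹ * A i k) ^ (1 - 1 / pv i) := ENNReal.mul_iSup _ _
    _ ≤ C := iSup_le hstep

end
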